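/- In ℤ[S_3] with S_3 = ⟨a, b ∣ a²=1, b³=1, aba=b²⟩, let ν = Σ_{s∈S_3} s be the sum of all six group elements and β = 1 + b + b². Then ν = β(a+1), and for h ∈ ℤ[S_3]: h(a−1) = 0 and h(b²a − ba − b + 1) = 0 if and only if h = mν for some integer m. -/

import Mathlib

/-- The symmetric group on 3 letters. -/
abbrev S3 := Equiv.Perm (Fin 3)

/-- The integral group ring ℤ[S₃]. -/
abbrev ZS3 := MonoidAlgebra ℤ S3

/-- The canonical inclusion of group elements in the group ring. -/
noncomputable def og (g : S3) : ZS3 := MonoidAlgebra.of ℤ S3 g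

/-- ν = Σ_{s ∈ S₃} s, the sum of all six group elements. -/
noncomputable def nu : ZS3 := ∑ s : S3, og s

/-- In ℤ[S₃] with S₃ = ⟨a, b ∣ a²=1, b³=1, aba=b²⟩, with β = 1 + b + b² one has
ν = β(a+1); moreover h(a−1) = 0 and h(b²a − ba − b + 1) = 0 iff h = mν for some m ∈ ℤ. -/
lemma og_mul (x y : S3) : og (x*y) = og x * og y := map_mul _ _ _
lemma og_one : og 1 = 1 := map_one (MonoidAlgebra.of ℤ S3)

lemma nu_apply (x : S3) : nu.coeff x = 1 := by
  rw [nu, MonoidAlgebra.coeff_sum, Finset.sum_apply']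
  simp [og, Finsupp.single_apply]

lemma nu_mul_og (g : S3) : nu * og g = nu := by
  rw [nu, Finset.sum_mul]
  simp only [← og_mul]
  exact Fintype.sum_equiv (Equiv.mulRight g) _ _ (fun s => rfl)

lemma h_apply_eq (h : ZS3) (hall : ∀ g : S3, h * og g = h) (x : S3) : h.coeff x = h.coeff 1 := by
  have := hall x⁻¹
  have h1 : (h * og x⁻¹).coeff 1 = h.coeff x := by
    simp [og]
  rw [← h1, this]

lemma not_cyclic (g : S3) : Subgroup.zpowers g ≠ ⊤ := by
  intro htop
  have hc : (Equiv.swap (0:Fin 3) 1) ∈ Subgroup.zpowers g := htop ▸ Subgroup.mem_top _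
  have hd : (Equiv.swap (0:Fin 3) 2) ∈ Subgroup.zpowers g := htop ▸ Subgroup.mem_top _
  obtain ⟨m, hm⟩ := hc
  obtain ⟨n, hn⟩ := hd
  have hcomm : (Equiv.swap (0:Fin 3) 1) * (Equiv.swap 0 2) = (Equiv.swap 0 2) * (Equiv.swap (0:Fin 3) 1) := by
    rw [← hm, ← hn]; exact (Commute.zpow_zpow (Commute.refl g) m n)
  exact absurd hcomm (by decide)

lemma key : ∀ a b : S3, a^2 = 1 → b^3 = 1 → a*b*a = b^2 → a ≠ 1 → b ≠ 1 →
    ((Finset.univ : Finset S3) = {1, b, b^2, a, b*a, b^2*a} ∧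
     (1:S3) ∉ ({b, b^2, a, b*a, b^2*a} : Finset S3) ∧
     b ∉ ({b^2, a, b*a, b^2*a} : Finset S3) ∧
     b^2 ∉ ({a, b*a, b^2*a} : Finset S3) ∧
     a ∉ ({b*a, b^2*a} : Finset S3) ∧
     b*a ∉ ({b^2*a} : Finset S3)) := by decide

theorem nu_eq_and_annihilator (a b : S3) (ha : a ^ 2 = 1) (hb : b ^ 3 = 1)
    (hab : a * b * a = b ^ 2) (hgen : Subgroup.closure {a, b} = ⊤) :
    nu = (1 + og b + og (b ^ 2)) * (og a + 1) ∧
    ∀ h : ZS3,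
      (h * (og a - 1) = 0 ∧
       h * (og (b ^ 2) * og a - og b * og a - og b + 1) = 0) ↔
      ∃ m : ℤ, h = m • nu := by
  -- a ≠ 1 and b ≠ 1
  have ha1 : a ≠ 1 := by
    intro h1
    apply not_cyclic b
    have : Subgroup.closure {a, b} ≤ Subgroup.zpowers b := by
      rw [Subgroup.closure_le]
      intro x hx
      rcases hx with hx | hx
      · simp only [hx, h1]; exact Subgroup.one_mem _
      · simp only [Set.mem_singleton_iff] at hx; subst hx; exact Subgroup.mem_zpowers _
    rw [hgen] at this
    exact top_le_iff.mp this
  have hb1 : b ≠ 1 := by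
    intro h1
    apply not_cyclic a
    have : Subgroup.closure {a, b} ≤ Subgroup.zpowers a := by
      rw [Subgroup.closure_le]
      intro x hx
      rcases hx with hx | hx
      · simp only [hx]; exact Subgroup.mem_zpowers _
      · simp only [Set.mem_singleton_iff] at hx; subst hx; rw [h1]; exact Subgroup.one_mem _
    rw [hgen] at this
    exact top_le_iff.mp this
  obtain ⟨huniv, hn1, hn2, hn3, hn4, hn5⟩ := key a b ha hb hab ha1 hb1
  -- group element facts
  have haa : a * a = 1 := by rw [← sq]; exact ha
  have hab' : a * b = b^2 * a := by
    have : a * b * a * a = b^2 * a := by rw [hab]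
    rwa [mul_assoc, haa, mul_one] at this
  have hbbb : b^2 * b = 1 := by rw [← pow_succ]; exact hb
  have e1 : b^2 * a * a = b^2 := by rw [mul_assoc, haa, mul_one]
  have e2 : b * a * a = b := by rw [mul_assoc, haa, mul_one]
  have e3 : b^2 * a * b = b * a := by
    rw [mul_assoc, hab', ← mul_assoc,
      show b^2*b^2 = b from by rw [← pow_add, show (2+2 : ℕ) = 4 from rfl, pow_succ, hb, one_mul]]
  -- Part 1
  have part1 : nu = (1 + og b + og (b ^ 2)) * (og a + 1) := by
    rw [nu, huniv]
    rw [Finset.sum_insert hn1, Finset.sum_insert hn2, Finset.sum_insert hn3,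
      Finset.sum_insert hn4, Finset.sum_insert hn5, Finset.sum_singleton]
    rw [og_mul, og_mul, og_one]
    noncomm_ring
  refine ⟨part1, fun h => ⟨fun ⟨h1, h2⟩ => ?_, fun ⟨m, hm⟩ => ?_⟩⟩
  · -- forward
    have hA : h * og a = h := by
      rw [mul_sub, mul_one, sub_eq_zero] at h1; exact h1
    simp only [← og_mul] at h2
    have i : h * og (b^2*a) - h * og (b*a) - h * og b + h = 0 := by
      rw [mul_add, mul_sub, mul_sub, mul_one] at h2; exact h2
    have ii : h * og (b^2) - h * og b - h * og (b*a) + h = 0 := by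
      have := congrArg (· * og a) i
      simp only [sub_mul, add_mul, zero_mul, mul_assoc, ← og_mul, e1, e2, hA] at this
      simpa [← mul_assoc, hA] using this
    have iii : h * og (b^2*a) = h * og (b^2) := by
      have h3 : (h * og (b^2*a) - h*og (b*a) - h*og b + h) - (h*og (b^2) - h*og b - h*og (b*a) + h)
          = h * og (b^2*a) - h * og (b^2) := by abel
      rw [i, ii, sub_zero] at h3
      exact sub_eq_zero.mp h3.symm
    have iv : h * og (b*a) = h := by
      have := congrArg (· * og b) iii
      simp only [mul_assoc, ← og_mul, e3, hbbb, og_one, mul_one] at this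
      exact this
    have hB : h * og b = h := by
      have := congrArg (· * og a) iv
      simp only [mul_assoc, ← og_mul, e2, hA] at this
      exact this
    have hall : ∀ g : S3, h * og g = h := by
      intro g
      have hg : g ∈ Subgroup.closure {a, b} := hgen ▸ Subgroup.mem_top g
      induction hg using Subgroup.closure_induction with
      | mem x hx => rcases hx with hx | hx
                    · rw [hx]; exact hA
                    · simp only [Set.mem_singleton_iff] at hx; rw [hx]; exact hB
      | one => rw [og_one, mul_one]
      | mul x y _ _ hx hy => rw [og_mul, ← mul_assoc, hx, hy]
      | inv x _ hx =>
          have := congrArg (· * og x⁻¹) hx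
          simp only [mul_assoc, ← og_mul, mul_inv_cancel, og_one, mul_one] at this
          exact this.symm
    refine ⟨h.coeff 1, ?_⟩
    ext x
    rw [h_apply_eq h hall x, MonoidAlgebra.coeff_smul, Finsupp.smul_apply, nu_apply, smul_eq_mul, mul_one]
  · -- reverse
    subst hm
    constructor
    · rw [smul_mul_assoc, mul_sub, mul_one, nu_mul_og, sub_self, smul_zero]
    · rw [smul_mul_assoc]
      have : nu * (og (b ^ 2) * og a - og b * og a - og b + 1) = 0 := by
        rw [mul_add, mul_sub, mul_sub, mul_one, ← mul_assoc, ← mul_assoc,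
          nu_mul_og, nu_mul_og, nu_mul_og, nu_mul_og]
        abel
      rw [this, smul_zero]
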